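/- Suppose the closed-loop cost admits the expansion J = J̄ + Σ_t C_t δx_t + R(δx), where δx_t satisfies δx_{t+1} = (A_t + B_t K_t) δx_t + ε B_t w_t + r_t(δx_t) with remainder ‖r_t(δx)‖ ≤ L‖δx‖² and |R(δx)| ≤ L Σ_t ‖δx_t‖², the noise w_t is bounded with ‖w_t‖ ≤ W and zero mean, and δx_0 = 0. Then there exist ε₀ > 0 and a constant C such that for all 0 < ε ≤ ε₀, |E[J] − J̄| ≤ C ε². -/

import Mathlib

open MeasureTheory ProbabilityTheory Matrix Finset

noncomputable def entSum {k m : ℕ} (M : Matrix (Fin k) (Fin m) ℝ) : ℝ :=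
  ∑ i, ∑ j, |M i j|

lemma entSum_nonneg {k m : ℕ} (M : Matrix (Fin k) (Fin m) ℝ) : 0 ≤ entSum M := by
  apply Finset.sum_nonneg; intro i _; apply Finset.sum_nonneg; intro j _; positivity

lemma norm_mulVec_le {k m : ℕ} (M : Matrix (Fin k) (Fin m) ℝ) (v : Fin m → ℝ) :
    ‖M.mulVec v‖ ≤ entSum M * ‖v‖ := by
  rw [pi_norm_le_iff_of_nonneg (mul_nonneg (entSum_nonneg M) (norm_nonneg v))]
  intro i
  rw [Real.norm_eq_abs]
  calc |(M.mulVec v) i| = |∑ j, M i j * v j| := rfl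
    _ ≤ ∑ j, |M i j * v j| := Finset.abs_sum_le_sum_abs _ _
    _ ≤ ∑ j, |M i j| * ‖v‖ := by
        apply Finset.sum_le_sum; intro j _
        rw [abs_mul]
        exact mul_le_mul_of_nonneg_left (by simpa [Real.norm_eq_abs] using norm_le_pi_norm v j) (abs_nonneg _)
    _ = (∑ j, |M i j|) * ‖v‖ := by rw [Finset.sum_mul]
    _ ≤ entSum M * ‖v‖ := by
        apply mul_le_mul_of_nonneg_right _ (norm_nonneg _)
        exact Finset.single_le_sum (f := fun i => ∑ j, |M i j|)
          (fun i _ => Finset.sum_nonneg fun j _ => abs_nonneg _) (Finset.mem_univ i)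

lemma abs_dot_le {m : ℕ} (c v : Fin m → ℝ) :
    |c ⬝ᵥ v| ≤ (∑ j, |c j|) * ‖v‖ := by
  calc |c ⬝ᵥ v| = |∑ j, c j * v j| := rfl
    _ ≤ ∑ j, |c j * v j| := Finset.abs_sum_le_sum_abs _ _
    _ ≤ ∑ j, |c j| * ‖v‖ := by
        apply Finset.sum_le_sum; intro j _
        rw [abs_mul]
        exact mul_le_mul_of_nonneg_left (by simpa [Real.norm_eq_abs] using norm_le_pi_norm v j) (abs_nonneg _)
    _ = _ := by rw [Finset.sum_mul]

lemma measurable_mulVec_comp {Ω : Type*} [MeasurableSpace Ω] {k m : ℕ}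
    (M : Matrix (Fin k) (Fin m) ℝ) {f : Ω → Fin m → ℝ} (hf : Measurable f) :
    Measurable fun ω => M.mulVec (f ω) := by
  rw [measurable_pi_iff]; intro i
  have : (fun ω => M.mulVec (f ω) i) = fun ω => ∑ j, M i j * f ω j := rfl
  rw [this]
  exact Finset.measurable_sum _ fun j _ =>
    measurable_const.mul ((measurable_pi_apply j).comp hf)

lemma integrable_of_bounded' {Ω : Type*} [MeasureSpace Ω] [IsFiniteMeasure (ℙ : Measure Ω)]
    {f : Ω → ℝ} (hm : Measurable f) (c : ℝ) (h : ∀ ω, |f ω| ≤ c) : Integrable f :=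
  (integrable_const c).mono' hm.aestronglyMeasurable
    (ae_of_all _ (by simpa [Real.norm_eq_abs] using h))

/-- The linearized noise process. -/
noncomputable def yproc {Ω : Type*} {n M : ℕ}
    (A : ℕ → Matrix (Fin n) (Fin n) ℝ) (B : ℕ → Matrix (Fin n) (Fin M) ℝ)
    (K : ℕ → Matrix (Fin M) (Fin n) ℝ) (w : ℕ → Ω → (Fin M → ℝ)) :
    ℕ → Ω → (Fin n → ℝ)
  | 0 => fun _ => 0
  | (t+1) => fun ω =>
      (A t + B t * K t).mulVec (yproc A B K w t ω) + (B t).mulVec (w t ω)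

noncomputable def Dc (a b : ℕ → ℝ) (L W : ℝ) : ℕ → ℝ
  | 0 => 0
  | (t+1) => a t * Dc a b L W t + b t * W + L * (Dc a b L W t)^2

noncomputable def Ec (a : ℕ → ℝ) (L : ℝ) (D : ℕ → ℝ) : ℕ → ℝ
  | 0 => 0
  | (t+1) => a t * Ec a L D t + L * (D t)^2

noncomputable def Yc (a b : ℕ → ℝ) (W : ℝ) : ℕ → ℝ
  | 0 => 0
  | (t+1) => a t * Yc a b W t + b t * W

/-- if the closed-loop cost expands as
`J = J̄ + Σ_t C_t δx_t + R(δx)` with quadratically bounded remainders in both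
the dynamics and the cost, bounded zero-mean noise, and `δx_0 = 0`, then there
are `ε₀ > 0` and `C` such that `|E[J] − J̄| ≤ C ε²` for all `0 < ε ≤ ε₀`. -/
theorem expected_cost_near_nominal
    {Ω : Type*} [MeasureSpace Ω] [IsProbabilityMeasure (ℙ : Measure Ω)]
    (n M T : ℕ)
    (A : ℕ → Matrix (Fin n) (Fin n) ℝ) (B : ℕ → Matrix (Fin n) (Fin M) ℝ)
    (K : ℕ → Matrix (Fin M) (Fin n) ℝ)
    (Cv : ℕ → (Fin n → ℝ)) (Jbar : ℝ) (L W : ℝ) (hL : 0 < L)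
    -- bounded, zero-mean, independent noise
    (w : ℕ → Ω → (Fin M → ℝ))
    (hw_meas : ∀ t, Measurable (w t))
    (hw_indep : iIndepFun w ℙ)
    (hw_bdd : ∀ t ω, ‖w t ω‖ ≤ W)
    (hw_mean : ∀ t i, (∫ ω, w t ω i) = 0)
    -- second-order remainders of the closed-loop dynamics
    (r : ℕ → (Fin n → ℝ) → (Fin n → ℝ))
    (hr : ∀ t z, ‖r t z‖ ≤ L * ‖z‖ ^ 2)
    -- second-order remainder of the cost
    (R : (ℕ → (Fin n → ℝ)) → ℝ)
    (hR : ∀ z : ℕ → (Fin n → ℝ), |R z| ≤ L * ∑ t ∈ Finset.range (T + 1), ‖z t‖ ^ 2)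
    -- for each `ε`, the closed-loop perturbation process
    (x : ℝ → ℕ → Ω → (Fin n → ℝ))
    (hx0 : ∀ ε ω, x ε 0 ω = 0)
    (hx : ∀ ε t ω, x ε (t + 1) ω =
      (A t + B t * K t).mulVec (x ε t ω) + ε • (B t).mulVec (w t ω)
        + r t (x ε t ω))
    -- the closed-loop cost
    (J : ℝ → Ω → ℝ)
    (hJ : ∀ ε ω, J ε ω =
      Jbar + (∑ t ∈ Finset.range (T + 1), Cv t ⬝ᵥ x ε t ω)
        + R (fun t => x ε t ω))
    (hJ_int : ∀ ε, Integrable (J ε)) :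
    ∃ ε₀ > 0, ∃ C : ℝ, ∀ ε : ℝ, 0 < ε → ε ≤ ε₀ →
      |(∫ ω, J ε ω) - Jbar| ≤ C * ε ^ 2 := by
  classical
  set W' : ℝ := max W 0 with hW'def
  have hW'0 : 0 ≤ W' := le_max_right _ _
  have hwb : ∀ t ω, ‖w t ω‖ ≤ W' := fun t ω => (hw_bdd t ω).trans (le_max_left _ _)
  set a : ℕ → ℝ := fun t => entSum (A t + B t * K t) with ha_def
  set b : ℕ → ℝ := fun t => entSum (B t) with hb_def
  have ha0 : ∀ t, 0 ≤ a t := fun t => entSum_nonneg _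
  have hb0 : ∀ t, 0 ≤ b t := fun t => entSum_nonneg _
  set y : ℕ → Ω → (Fin n → ℝ) := yproc A B K w with hy_def
  have y0 : ∀ ω, y 0 ω = 0 := fun _ => rfl
  have ystep : ∀ t ω, y (t+1) ω =
      (A t + B t * K t).mulVec (y t ω) + (B t).mulVec (w t ω) := fun _ _ => rfl
  set D : ℕ → ℝ := Dc a b L W' with hD_def
  set E : ℕ → ℝ := Ec a L D with hE_def
  set Y : ℕ → ℝ := Yc a b W' with hY_def
  have hD0 : ∀ t, 0 ≤ D t := by
    intro t; induction t with
    | zero => simp [hD_def, Dc]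
    | succ t ih =>
      have : D (t+1) = a t * D t + b t * W' + L * (D t)^2 := rfl
      rw [this]
      have := ha0 t; have := hb0 t
      positivity
  have hY0 : ∀ t, 0 ≤ Y t := by
    intro t; induction t with
    | zero => simp [hY_def, Yc]
    | succ t ih =>
      have : Y (t+1) = a t * Y t + b t * W' := rfl
      rw [this]
      have := ha0 t; have := hb0 t
      positivity
  -- boundedness of y
  have hy_bdd : ∀ t ω, ‖y t ω‖ ≤ Y t := by
    intro t; induction t with
    | zero => intro ω; simp [y0, hY_def, Yc]
    | succ t ih =>
      intro ω
      rw [ystep]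
      calc ‖(A t + B t * K t).mulVec (y t ω) + (B t).mulVec (w t ω)‖
          ≤ ‖(A t + B t * K t).mulVec (y t ω)‖ + ‖(B t).mulVec (w t ω)‖ := norm_add_le _ _
        _ ≤ a t * ‖y t ω‖ + b t * ‖w t ω‖ :=
            add_le_add (norm_mulVec_le _ _) (norm_mulVec_le _ _)
        _ ≤ a t * Y t + b t * W' :=
            add_le_add (mul_le_mul_of_nonneg_left (ih ω) (ha0 t))
              (mul_le_mul_of_nonneg_left (hwb t ω) (hb0 t))
        _ = Y (t+1) := rfl
  -- measurability of y
  have hy_meas : ∀ t, Measurable (y t) := by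
    intro t; induction t with
    | zero => exact measurable_const
    | succ t ih =>
      have : y (t+1) = fun ω =>
          (A t + B t * K t).mulVec (y t ω) + (B t).mulVec (w t ω) := rfl
      rw [this]
      exact (measurable_mulVec_comp _ ih).add (measurable_mulVec_comp _ (hw_meas t))
  have hy_int : ∀ t i, Integrable (fun ω => y t ω i) := by
    intro t i
    refine integrable_of_bounded' ((measurable_pi_apply i).comp (hy_meas t)) (Y t) ?_
    intro ω
    simpa [Real.norm_eq_abs] using (norm_le_pi_norm (y t ω) i).trans (hy_bdd t ω)
  have hw_int : ∀ t i, Integrable (fun ω => w t ω i) := by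
    intro t i
    refine integrable_of_bounded' ((measurable_pi_apply i).comp (hw_meas t)) W' ?_
    intro ω
    simpa [Real.norm_eq_abs] using (norm_le_pi_norm (w t ω) i).trans (hwb t ω)
  -- zero mean of y
  have hy_mean : ∀ t i, (∫ ω, y t ω i) = 0 := by
    intro t; induction t with
    | zero => intro i; simp [y0]
    | succ t ih =>
      intro i
      have hrw : (fun ω => y (t+1) ω i)
          = fun ω => (∑ j, (A t + B t * K t) i j * y t ω j)
            + (∑ j, (B t) i j * w t ω j) := rfl
      rw [hrw, integral_add
        (integrable_finset_sum _ fun j _ => (hy_int t j).const_mul _)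
        (integrable_finset_sum _ fun j _ => (hw_int t j).const_mul _),
        integral_finset_sum _ (fun j _ => (hy_int t j).const_mul _),
        integral_finset_sum _ (fun j _ => (hw_int t j).const_mul _)]
      simp [integral_const_mul, ih, hw_mean]
  -- deterministic bound on x
  have hx_bdd : ∀ ε : ℝ, 0 < ε → ε ≤ 1 → ∀ t ω, ‖x ε t ω‖ ≤ D t * ε := by
    intro ε hε hε1 t
    induction t with
    | zero => intro ω; rw [hx0]; simp [hD_def, Dc]
    | succ t ih =>
      intro ω
      have hε2 : ε ^ 2 ≤ ε := by nlinarith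
      rw [hx]
      calc ‖(A t + B t * K t).mulVec (x ε t ω) + ε • (B t).mulVec (w t ω) + r t (x ε t ω)‖
          ≤ ‖(A t + B t * K t).mulVec (x ε t ω)‖ + ‖ε • (B t).mulVec (w t ω)‖
            + ‖r t (x ε t ω)‖ := norm_add₃_le
        _ ≤ a t * ‖x ε t ω‖ + ε * (b t * ‖w t ω‖) + L * ‖x ε t ω‖ ^ 2 := by
            refine add_le_add (add_le_add (norm_mulVec_le _ _) ?_) (hr t _)
            rw [norm_smul, Real.norm_eq_abs, abs_of_pos hε]
            exact mul_le_mul_of_nonneg_left (norm_mulVec_le _ _) hε.le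
        _ ≤ a t * (D t * ε) + ε * (b t * W') + L * (D t * ε) ^ 2 := by
            refine add_le_add (add_le_add
              (mul_le_mul_of_nonneg_left (ih ω) (ha0 t))
              (mul_le_mul_of_nonneg_left (mul_le_mul_of_nonneg_left (hwb t ω) (hb0 t)) hε.le)) ?_
            refine mul_le_mul_of_nonneg_left ?_ hL.le
            have h1 : ‖x ε t ω‖ ≤ D t * ε := ih ω
            have h2 : 0 ≤ ‖x ε t ω‖ := norm_nonneg _
            nlinarith
        _ ≤ (a t * D t + b t * W' + L * (D t)^2) * ε := by
            have hDt := hD0 t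
            have hLD : L * (D t)^2 * ε^2 ≤ L * (D t)^2 * ε :=
              mul_le_mul_of_nonneg_left hε2 (mul_nonneg hL.le (sq_nonneg _))
            nlinarith [mul_nonneg (ha0 t) hDt]
        _ = D (t+1) * ε := rfl
  -- error bound x - ε y
  have he_bdd : ∀ ε : ℝ, 0 < ε → ε ≤ 1 → ∀ t ω,
      ‖x ε t ω - ε • y t ω‖ ≤ E t * ε ^ 2 := by
    intro ε hε hε1 t
    induction t with
    | zero =>
      intro ω; rw [hx0, y0]
      simp [hE_def, Ec]
    | succ t ih =>
      intro ω
      have key : x ε (t+1) ω - ε • y (t+1) ω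
          = (A t + B t * K t).mulVec (x ε t ω - ε • y t ω) + r t (x ε t ω) := by
        rw [hx, ystep, Matrix.mulVec_sub, Matrix.mulVec_smul, smul_add]
        abel
      rw [key]
      calc ‖(A t + B t * K t).mulVec (x ε t ω - ε • y t ω) + r t (x ε t ω)‖
          ≤ ‖(A t + B t * K t).mulVec (x ε t ω - ε • y t ω)‖ + ‖r t (x ε t ω)‖ :=
            norm_add_le _ _
        _ ≤ a t * ‖x ε t ω - ε • y t ω‖ + L * ‖x ε t ω‖ ^ 2 :=
            add_le_add (norm_mulVec_le _ _) (hr t _)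
        _ ≤ a t * (E t * ε ^ 2) + L * ((D t)^2 * ε ^ 2) := by
            refine add_le_add (mul_le_mul_of_nonneg_left (ih ω) (ha0 t)) ?_
            refine mul_le_mul_of_nonneg_left ?_ hL.le
            have h1 := hx_bdd ε hε hε1 t ω
            have h2 : (0:ℝ) ≤ ‖x ε t ω‖ := norm_nonneg _
            nlinarith
        _ = E (t+1) * ε ^ 2 := by
            have : E (t+1) = a t * E t + L * (D t)^2 := rfl
            rw [this]; ring
  -- the linear noise functional
  set gl : Ω → ℝ := fun ω => ∑ t ∈ Finset.range (T+1), Cv t ⬝ᵥ y t ω with hgl_def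
  have hgl_int : Integrable gl := by
    refine integrable_finset_sum _ fun t _ => ?_
    have : (fun ω => Cv t ⬝ᵥ y t ω) = fun ω => ∑ j, Cv t j * y t ω j := rfl
    rw [this]
    exact integrable_finset_sum _ fun j _ => (hy_int t j).const_mul _
  have hgl_mean : (∫ ω, gl ω) = 0 := by
    rw [hgl_def, integral_finset_sum _ (fun t _ => ?_)]
    · apply Finset.sum_eq_zero
      intro t _
      have hrw : (fun ω => Cv t ⬝ᵥ y t ω) = fun ω => ∑ j, Cv t j * y t ω j := rfl
      rw [hrw, integral_finset_sum _ (fun j _ => (hy_int t j).const_mul _)]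
      simp [integral_const_mul, hy_mean]
    · have hrw : (fun ω => Cv t ⬝ᵥ y t ω) = fun ω => ∑ j, Cv t j * y t ω j := rfl
      rw [hrw]
      exact integrable_finset_sum _ fun j _ => (hy_int t j).const_mul _
  set C : ℝ := (∑ t ∈ Finset.range (T+1), (∑ j, |Cv t j|) * E t)
      + L * ∑ t ∈ Finset.range (T+1), (D t)^2 with hC_def
  refine ⟨1, one_pos, C, ?_⟩
  intro ε hε hε1
  set h : Ω → ℝ := fun ω => J ε ω - Jbar - ε * gl ω with hh_def
  have hh_int : Integrable h :=
    ((hJ_int ε).sub (integrable_const Jbar)).sub (hgl_int.const_mul ε)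
  have hh_bd : ∀ ω, |h ω| ≤ C * ε ^ 2 := by
    intro ω
    have hrw : h ω = (∑ t ∈ Finset.range (T+1), Cv t ⬝ᵥ (x ε t ω - ε • y t ω))
        + R (fun t => x ε t ω) := by
      have hterm : ∀ t, Cv t ⬝ᵥ (x ε t ω - ε • y t ω)
          = Cv t ⬝ᵥ x ε t ω - ε * (Cv t ⬝ᵥ y t ω) := by
        intro t
        rw [dotProduct_sub, dotProduct_smul]
        simp [smul_eq_mul]
      rw [hh_def]
      simp only [hJ ε ω, hgl_def, Finset.mul_sum, hterm, Finset.sum_sub_distrib]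
      ring
    rw [hrw]
    calc |(∑ t ∈ Finset.range (T+1), Cv t ⬝ᵥ (x ε t ω - ε • y t ω))
          + R (fun t => x ε t ω)|
        ≤ |∑ t ∈ Finset.range (T+1), Cv t ⬝ᵥ (x ε t ω - ε • y t ω)|
          + |R (fun t => x ε t ω)| := abs_add_le _ _
      _ ≤ (∑ t ∈ Finset.range (T+1), (∑ j, |Cv t j|) * (E t * ε^2))
          + L * ∑ t ∈ Finset.range (T+1), ((D t)^2 * ε^2) := by
          refine add_le_add ?_ ?_
          · refine (Finset.abs_sum_le_sum_abs _ _).trans (Finset.sum_le_sum fun t _ => ?_)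
            refine (abs_dot_le _ _).trans ?_
            exact mul_le_mul_of_nonneg_left (he_bdd ε hε hε1 t ω)
              (Finset.sum_nonneg fun j _ => abs_nonneg _)
          · refine (hR _).trans (mul_le_mul_of_nonneg_left
              (Finset.sum_le_sum fun t _ => ?_) hL.le)
            have h1 := hx_bdd ε hε hε1 t ω
            have h2 : (0:ℝ) ≤ ‖x ε t ω‖ := norm_nonneg _
            nlinarith [hD0 t]
      _ = C * ε ^ 2 := by
          simp only [hC_def, add_mul, Finset.sum_mul, Finset.mul_sum]
          congr 1
          · exact Finset.sum_congr rfl fun t _ => by exact Finset.sum_congr rfl fun j _ => by ring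
          · exact Finset.sum_congr rfl fun t _ => by ring
  have key : (∫ ω, J ε ω) - Jbar = ∫ ω, h ω := by
    have h1 : (∫ ω, h ω) = (∫ ω, (J ε ω - Jbar)) - ∫ ω, ε * gl ω :=
      integral_sub (f := fun ω => J ε ω - Jbar) (g := fun ω => ε * gl ω)
        ((hJ_int ε).sub (integrable_const Jbar)) (hgl_int.const_mul ε)
    have h2 : (∫ ω, (J ε ω - Jbar)) = (∫ ω, J ε ω) - Jbar := by
      rw [integral_sub (hJ_int ε) (integrable_const Jbar), integral_const]
      simp
    have h3 : (∫ ω, ε * gl ω) = ε * ∫ ω, gl ω := integral_const_mul ε gl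
    rw [h1, h2, h3, hgl_mean]; ring
  rw [key]
  have hb1 : |∫ ω, h ω| ≤ ∫ ω, |h ω| := by
    simpa [Real.norm_eq_abs] using norm_integral_le_integral_norm (μ := ℙ) h
  have hb2 : (∫ ω, |h ω|) ≤ C * ε ^ 2 := by
    have := integral_mono (μ := ℙ) hh_int.abs (integrable_const (C * ε ^ 2)) hh_bd
    simpa using this
  exact hb1.trans hb2
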